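/- Let B be a finite Garside shadow in (W,S). Then the voracious language V_B is a regular language over S. -/

import Mathlib

open CoxeterSystem

variable {ι W : Type} [Group W] {cm : CoxeterMatrix ι}

/-- The right weak order on `W`: `g ⪯ h` iff `ℓ(g) + ℓ(g⁻¹h) = ℓ(h)`. -/
def WLe (cs : CoxeterSystem cm W) (g h : W) : Prop :=
  cs.length g + cs.length (g⁻¹ * h) = cs.length h

/-- `w` is a suffix of `g` if `g = u * w` with `ℓ(g) = ℓ(u) + ℓ(w)`. -/
def IsSuffixOf (cs : CoxeterSystem cm W) (w g : W) : Prop :=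
  ∃ u : W, g = u * w ∧ cs.length g = cs.length u + cs.length w

/-- `j` is the join (least upper bound) of `X` with respect to the right weak order. -/
def IsJoin (cs : CoxeterSystem cm W) (X : Set W) (j : W) : Prop :=
  (∀ x ∈ X, WLe cs x j) ∧ ∀ u : W, (∀ x ∈ X, WLe cs x u) → WLe cs j u

/-- A Garside shadow: a subset of `W` containing all simple reflections, closed under
existing joins and under taking suffixes. -/
def IsGarsideShadow (cs : CoxeterSystem cm W) (B : Set W) : Prop :=
  (∀ i : ι, cs.simple i ∈ B) ∧
  (∀ X : Set W, X ⊆ B → ∀ j : W, IsJoin cs X j → j ∈ B) ∧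
  (∀ b ∈ B, ∀ w : W, IsSuffixOf cs w b → w ∈ B)

/-- `π` is the `B`-projection: `π g` is the join of `{b ∈ B : b ⪯ g}` and lies in `B`. -/
def IsGarsideProjection (cs : CoxeterSystem cm W) (B : Set W) (π : W → W) : Prop :=
  ∀ g : W, π g ∈ B ∧ IsJoin cs {b : W | b ∈ B ∧ WLe cs b g} (π g)

/-- The voracious projection with respect to `π = π_B`: `ν_B(g) = g · π_B(g⁻¹)`. -/
def vor (π : W → W) (g : W) : W := g * π g⁻¹

/-- The language `L_g`, defined inductively: `L_id = {ε}` and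
`L_g = {uv : u ∈ L_{ν_B(g)}, v a minimal length word representing ν_B(g)⁻¹g}`. -/
inductive VorL (cs : CoxeterSystem cm W) (π : W → W) : W → List ι → Prop
  | nil : VorL cs π 1 []
  | step {g : W} {u v : List ι} (hg : g ≠ 1) (hu : VorL cs π (vor π g) u)
      (hv : cs.wordProd v = (vor π g)⁻¹ * g)
      (hmin : v.length = cs.length ((vor π g)⁻¹ * g)) :
      VorL cs π g (u ++ v)

/-- The voracious language `V_B = ⋃_{g ∈ W} L_g`. -/
def VorLang (cs : CoxeterSystem cm W) (π : W → W) : Language ι :=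
  {v : List ι | ∃ g : W, VorL cs π g v}

/-- The reflection `r` separates `g` from `h`. -/
def SepElem (cs : CoxeterSystem cm W) (r g h : W) : Prop :=
  Xor' (cs.length (r * g) < cs.length g) (cs.length (r * h) < cs.length h)

/-- The reflection `r'` separates `g` from the wall of the reflection `r`. -/
def SepWall (cs : CoxeterSystem cm W) (r' g r : W) : Prop :=
  ∀ h : W, (∃ i : ι, r * h = h * cs.simple i) → SepElem cs r' g h

/-- The wall of the reflection `r` is `m`-close to `g`: at most `m` reflections
separate `g` from the wall of `r`. -/
def MClose (cs : CoxeterSystem cm W) (m : ℕ) (g r : W) : Prop :=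
  ∃ F : Finset W, F.card ≤ m ∧
    ∀ r' : W, cs.IsReflection r' → SepWall cs r' g r → r' ∈ F


namespace VorProof

variable {cs : CoxeterSystem cm W} {B : Set W} {piB : W → W}

lemma wle_refl (g : W) : WLe cs g g := by simp [WLe]

lemma wle_one (g : W) : WLe cs 1 g := by simp [WLe]

lemma wle_trans {a b c : W} (h1 : WLe cs a b) (h2 : WLe cs b c) : WLe cs a c := by
  unfold WLe at *
  have e : (a⁻¹ * b) * (b⁻¹ * c) = a⁻¹ * c := by group
  have k1 : cs.length (a⁻¹ * c) ≤ cs.length (a⁻¹ * b) + cs.length (b⁻¹ * c) := by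
    have := cs.length_mul_le (a⁻¹ * b) (b⁻¹ * c)
    rwa [e] at this
  have k2 : cs.length c ≤ cs.length a + cs.length (a⁻¹ * c) := by
    have := cs.length_mul_le a (a⁻¹ * c)
    rwa [mul_inv_cancel_left] at this
  omega

lemma wle_antisymm {a b : W} (h1 : WLe cs a b) (h2 : WLe cs b a) : a = b := by
  unfold WLe at *
  have : cs.length (a⁻¹ * b) = 0 := by omega
  have := cs.length_eq_zero_iff.mp this
  have : a * (a⁻¹ * b) = a * 1 := by rw [this]
  simpa using this.symm

lemma wle_simple_iff {i : ι} {u : W} :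
    WLe cs (cs.simple i) u ↔ cs.length (cs.simple i * u) + 1 = cs.length u := by
  unfold WLe
  rw [cs.length_simple, cs.inv_simple]
  omega

lemma length_simple_mul_eq_add_one_iff {i : ι} {u : W} :
    cs.length (cs.simple i * u) = cs.length u + 1 ↔ ¬ WLe cs (cs.simple i) u := by
  rw [wle_simple_iff]
  rcases cs.length_simple_mul u i with h | h <;> omega

section Shadow

variable (hB : IsGarsideShadow cs B) (hpi : IsGarsideProjection cs B piB)
include hpi

lemma pi_mem (g : W) : piB g ∈ B := (hpi g).1

lemma pi_wle (g : W) : WLe cs (piB g) g := (hpi g).2.2 g (fun _ hx => hx.2)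

lemma wle_pi {b g : W} (hb : b ∈ B) (h : WLe cs b g) : WLe cs b (piB g) :=
  (hpi g).2.1 b ⟨hb, h⟩

lemma pi_one : piB (1 : W) = 1 := by
  have h := pi_wle hpi (1 : W)
  unfold WLe at h
  rw [cs.length_one] at h
  exact cs.length_eq_zero_iff.mp (by omega)

lemma red_transfer (hB : IsGarsideShadow cs B) {i : ι} (u : W) :
    cs.length (cs.simple i * piB u) = cs.length (piB u) + 1 ↔
      cs.length (cs.simple i * u) = cs.length u + 1 := by
  rw [length_simple_mul_eq_add_one_iff, length_simple_mul_eq_add_one_iff]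
  exact not_congr ⟨fun h => wle_trans h (pi_wle hpi u), fun h => wle_pi hpi (hB.1 i) h⟩

lemma split_helper (hB : IsGarsideShadow cs B) {i : ι} {u j : W}
    (hjB : j ∈ B) (hsj : WLe cs (cs.simple i) j) (hju : WLe cs j (cs.simple i * u))
    (hu : cs.length (cs.simple i * u) = cs.length u + 1) :
    ∃ j' : W, j = cs.simple i * j' ∧ cs.length j = cs.length j' + 1 ∧ j' ∈ B ∧ WLe cs j' u := by
  refine ⟨cs.simple i * j, ?_, ?_, ?_, ?_⟩
  · rw [← mul_assoc, cs.simple_mul_simple_self, one_mul]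
  · have := wle_simple_iff.mp hsj
    omega
  · refine hB.2.2 j hjB _ ⟨cs.simple i, ?_, ?_⟩
    · rw [← mul_assoc, cs.simple_mul_simple_self, one_mul]
    · rw [cs.length_simple]
      have := wle_simple_iff.mp hsj
      omega
  · unfold WLe at hju ⊢
    have e : (cs.simple i * j)⁻¹ * u = j⁻¹ * (cs.simple i * u) := by
      rw [mul_inv_rev, cs.inv_simple]; group
    have hl := wle_simple_iff.mp hsj
    rw [e]
    omega

lemma compose_helper {i : ι} {u j' : W}
    (hu : cs.length (cs.simple i * u) = cs.length u + 1)
    (hsj' : cs.length (cs.simple i * j') = cs.length j' + 1)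
    (hj'u : WLe cs j' u) : WLe cs (cs.simple i * j') (cs.simple i * u) := by
  unfold WLe at *
  have e : (cs.simple i * j')⁻¹ * (cs.simple i * u) = j'⁻¹ * u := by
    rw [mul_inv_rev, mul_assoc, inv_mul_cancel_left]
  rw [e, hsj', hu]
  omega

include hB in
/-- The key lemma: the Garside projection is computed letter by letter. -/
lemma pi_simple_mul {i : ι} {w : W}
    (hred : cs.length (cs.simple i * w) = cs.length w + 1) :
    piB (cs.simple i * w) = piB (cs.simple i * piB w) := by
  have hxw : WLe cs (piB w) w := pi_wle hpi w
  have hsx : cs.length (cs.simple i * piB w) = cs.length (piB w) + 1 :=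
    (red_transfer hpi hB w).mpr hred
  have hsw' : WLe cs (cs.simple i) (cs.simple i * w) := by
    unfold WLe
    rw [cs.length_simple, cs.inv_simple, ← mul_assoc, cs.simple_mul_simple_self, one_mul]
    omega
  have hsx' : WLe cs (cs.simple i) (cs.simple i * piB w) := by
    unfold WLe
    rw [cs.length_simple, cs.inv_simple, ← mul_assoc, cs.simple_mul_simple_self, one_mul]
    omega
  apply wle_antisymm
  · obtain ⟨j', hje, _, hj'B, hj'w⟩ :=
      split_helper hpi hB (pi_mem hpi (cs.simple i * w))
        (wle_pi hpi (hB.1 i) hsw') (pi_wle hpi (cs.simple i * w)) hred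
    have hsj' : cs.length (cs.simple i * j') = cs.length j' + 1 := by
      rw [← hje]; omega
    have hc := compose_helper hpi hsx hsj' (wle_pi hpi hj'B hj'w)
    rw [← hje] at hc
    exact wle_pi hpi (pi_mem hpi _) hc
  · obtain ⟨k', hke, _, hk'B, hk'x⟩ :=
      split_helper hpi hB (pi_mem hpi (cs.simple i * piB w))
        (wle_pi hpi (hB.1 i) hsx') (pi_wle hpi (cs.simple i * piB w)) hsx
    have hsk' : cs.length (cs.simple i * k') = cs.length k' + 1 := by
      rw [← hke]; omega
    have hc := compose_helper hpi hred hsk' (wle_trans hk'x hxw)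
    rw [← hke] at hc
    exact wle_pi hpi (pi_mem hpi _) hc

end Shadow

end VorProof

namespace VorProof2

open VorProof

variable {cs : CoxeterSystem cm W} {B : Set W} {piB : W → W}

lemma vor_inv_mul (g : W) : (vor piB g)⁻¹ * g = (piB g⁻¹)⁻¹ := by
  unfold vor
  rw [mul_inv_rev]
  group

section Shadow

variable (hB : IsGarsideShadow cs B) (hpi : IsGarsideProjection cs B piB)

include hpi in
lemma length_vor_add (g : W) :
    cs.length (vor piB g) + cs.length ((vor piB g)⁻¹ * g) = cs.length g := by
  have h := pi_wle hpi g⁻¹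
  unfold WLe at h
  have e1 : cs.length (vor piB g) = cs.length ((piB g⁻¹)⁻¹ * g⁻¹) := by
    rw [← cs.length_inv]
    congr 1
    unfold vor
    rw [mul_inv_rev]
  have e2 : cs.length ((vor piB g)⁻¹ * g) = cs.length (piB g⁻¹) := by
    rw [vor_inv_mul, cs.length_inv]
  rw [e1, e2, ← cs.length_inv g]
  omega

include hpi in
lemma vorL_prod_reduced {g : W} {v : List ι} (h : VorL cs piB g v) :
    cs.wordProd v = g ∧ cs.IsReduced v := by
  induction h with
  | nil => simp [CoxeterSystem.IsReduced]
  | @step g u v hg hu hv hmin ih =>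
    obtain ⟨hpu, hru⟩ := ih
    have hprod : cs.wordProd (u ++ v) = g := by
      rw [cs.wordProd_append, hpu, hv, mul_inv_cancel_left]
    refine ⟨hprod, ?_⟩
    unfold CoxeterSystem.IsReduced at hru ⊢
    rw [hprod, List.length_append]
    rw [hpu] at hru
    have := length_vor_add hpi g
    omega

include hpi in
lemma one_memB (hB : IsGarsideShadow cs B) : (1 : W) ∈ B := by
  refine hB.2.1 ∅ (by simp) 1 ⟨by simp, fun u _ => wle_one u⟩

lemma isReduced_append {ω₁ ω₂ : List ι} (h : cs.IsReduced (ω₁ ++ ω₂)) :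
    cs.IsReduced ω₁ ∧ cs.IsReduced ω₂ := by
  have h1 := CoxeterSystem.IsReduced.take h ω₁.length
  have h2 := CoxeterSystem.IsReduced.drop h ω₁.length
  rw [List.take_left] at h1
  rw [List.drop_left] at h2
  exact ⟨h1, h2⟩

include hB hpi in
lemma suffix_memB {t r : List ι} (hv : cs.IsReduced (t ++ r))
    (hbB : (cs.wordProd (t ++ r))⁻¹ ∈ B) : (cs.wordProd t)⁻¹ ∈ B := by
  refine hB.2.2 _ hbB _ ⟨(cs.wordProd r)⁻¹, ?_, ?_⟩
  · rw [cs.wordProd_append, mul_inv_rev]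
  · obtain ⟨h1, h2⟩ := isReduced_append hv
    unfold CoxeterSystem.IsReduced at hv h1 h2
    rw [cs.length_inv, cs.length_inv, cs.length_inv, hv, h1, h2, List.length_append]
    omega

end Shadow

/-- The NFA recognizing the voracious language. -/
def vorNFA (cs : CoxeterSystem cm W) (B : Set W) (piB : W → W) : NFA ι (↥B × ↥B) where
  step := fun q a => {q' | cs.length (cs.simple a * (q.1 : W)) = cs.length (q.1 : W) + 1 ∧
      (q'.1 : W) = piB (cs.simple a * (q.1 : W)) ∧
      ((q'.2 : W) = cs.simple a * (q.2 : W) ∨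
        ((q'.2 : W) = 1 ∧ cs.simple a * (q.2 : W) = piB (cs.simple a * (q.1 : W))))}
  start := {q | (q.1 : W) = 1 ∧ (q.2 : W) = 1}
  accept := {q | (q.2 : W) = 1}

/-- The invariant carried by reachable states. -/
def Inv (cs : CoxeterSystem cm W) (piB : W → W) (B : Set W) (p : List ι) (q : ↥B × ↥B) : Prop :=
  cs.IsReduced p ∧ (q.1 : W) = piB (cs.wordProd p)⁻¹ ∧
  ∃ p0 t : List ι, p = p0 ++ t ∧ VorL cs piB (cs.wordProd p0) p0 ∧
    cs.wordProd t = ((q.2 : W))⁻¹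

section Main

variable (hB : IsGarsideShadow cs B) (hpi : IsGarsideProjection cs B piB)

include hB hpi in
lemma inv_of_eval : ∀ (p : List ι) (q : ↥B × ↥B),
    q ∈ (vorNFA cs B piB).eval p → Inv cs piB B p q := by
  intro p
  induction p using List.reverseRecOn with
  | nil =>
    intro q hq
    obtain ⟨h1, h2⟩ : (q.1 : W) = 1 ∧ (q.2 : W) = 1 := hq
    refine ⟨by simp [CoxeterSystem.IsReduced], ?_, [], [], by simp, ?_, ?_⟩
    · rw [cs.wordProd_nil, inv_one, pi_one hpi, h1]
    · rw [cs.wordProd_nil]; exact VorL.nil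
    · rw [cs.wordProd_nil, h2, inv_one]
  | append_singleton p a ih =>
    intro q' hq'
    rw [NFA.eval_append_singleton, NFA.mem_stepSet] at hq'
    obtain ⟨q, hq, hstep⟩ := hq'
    obtain ⟨hredp, hy, p0, t, hp, hVor, ht⟩ := ih q hq
    obtain ⟨hcond, hy', hd'⟩ :
        cs.length (cs.simple a * (q.1 : W)) = cs.length (q.1 : W) + 1 ∧
        (q'.1 : W) = piB (cs.simple a * (q.1 : W)) ∧
        ((q'.2 : W) = cs.simple a * (q.2 : W) ∨
          ((q'.2 : W) = 1 ∧ cs.simple a * (q.2 : W) = piB (cs.simple a * (q.1 : W)))) := hstep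
    rw [hy] at hcond hy' hd'
    set z := cs.wordProd p with hzdef
    have hz : cs.length (cs.simple a * z⁻¹) = cs.length z⁻¹ + 1 :=
      (red_transfer hpi hB z⁻¹).mp hcond
    have hlen : cs.length (z * cs.simple a) = cs.length z + 1 := by
      rw [← cs.length_inv (z * cs.simple a), mul_inv_rev, cs.inv_simple, hz, cs.length_inv]
    have hznew : (cs.wordProd (p ++ [a]))⁻¹ = cs.simple a * z⁻¹ := by
      rw [cs.wordProd_append, cs.wordProd_singleton, mul_inv_rev, cs.inv_simple]
    have hredpa : cs.IsReduced (p ++ [a]) := by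
      unfold CoxeterSystem.IsReduced at hredp ⊢
      rw [cs.wordProd_append, cs.wordProd_singleton, List.length_append, hlen, hredp]
      simp
    have hynew : (q'.1 : W) = piB (cs.wordProd (p ++ [a]))⁻¹ := by
      rw [hznew, pi_simple_mul hB hpi hz, hy']
    refine ⟨hredpa, hynew, ?_⟩
    rcases hd' with hT1 | ⟨hq'2, hT2⟩
    · refine ⟨p0, t ++ [a], by rw [hp, List.append_assoc], hVor, ?_⟩
      rw [cs.wordProd_append, cs.wordProd_singleton, ht, hT1, mul_inv_rev, cs.inv_simple]
    · refine ⟨p ++ [a], [], by simp, ?_, by rw [cs.wordProd_nil, hq'2, inv_one]⟩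
      set g' := cs.wordProd (p ++ [a]) with hg'def
      have hg'e : g' = z * cs.simple a := by
        rw [hg'def, cs.wordProd_append, cs.wordProd_singleton]
      have hpig' : piB g'⁻¹ = cs.simple a * (q.2 : W) := by
        rw [hznew, pi_simple_mul hB hpi hz, ← hT2]
      have hz0 : z = cs.wordProd p0 * ((q.2 : W))⁻¹ := by
        rw [hzdef, hp, cs.wordProd_append, ht]
      have hvor : vor piB g' = cs.wordProd p0 := by
        unfold vor
        rw [hpig', hg'e, hz0]
        rw [mul_assoc (cs.wordProd p0 * ((q.2:W))⁻¹), ← mul_assoc (cs.simple a),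
          cs.simple_mul_simple_self, one_mul, inv_mul_cancel_right]
      have hv2 : cs.wordProd (t ++ [a]) = (vor piB g')⁻¹ * g' := by
        rw [hvor, cs.wordProd_append, cs.wordProd_singleton, ht, hg'e, hz0]
        group
      have hredta : cs.IsReduced (t ++ [a]) := by
        have hh : cs.IsReduced (p0 ++ (t ++ [a])) := by
          rw [← List.append_assoc, ← hp]; exact hredpa
        exact (isReduced_append hh).2
      have hmin2 : (t ++ [a]).length = cs.length ((vor piB g')⁻¹ * g') := by
        rw [← hv2]
        exact hredta.symm
      have hg'ne : g' ≠ 1 := by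
        intro h
        unfold CoxeterSystem.IsReduced at hredpa
        rw [← hg'def, h, cs.length_one] at hredpa
        simp at hredpa
      have := VorL.step (cs := cs) (π := piB) hg'ne
        (by rw [hvor]; exact hVor) hv2 hmin2
      rwa [← List.append_assoc, ← hp] at this

end Main


section Main2

variable (hB : IsGarsideShadow cs B) (hpi : IsGarsideProjection cs B piB)

lemma inv_red {p : List ι} {a : ι} (h : cs.IsReduced (p ++ [a])) :
    cs.length (cs.simple a * (cs.wordProd p)⁻¹) = cs.length ((cs.wordProd p)⁻¹) + 1 := by
  have hp := (isReduced_append h).1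
  unfold CoxeterSystem.IsReduced at h hp
  rw [cs.wordProd_append, cs.wordProd_singleton, List.length_append,
    List.length_singleton] at h
  rw [← cs.length_inv (cs.simple a * (cs.wordProd p)⁻¹), mul_inv_rev, inv_inv,
    cs.inv_simple, h, cs.length_inv, hp]

include hB hpi in
lemma cond_of_reduced {p : List ι} {a : ι} (h : cs.IsReduced (p ++ [a])) :
    cs.length (cs.simple a * piB (cs.wordProd p)⁻¹)
      = cs.length (piB (cs.wordProd p)⁻¹) + 1 :=
  (red_transfer hpi hB _).mpr (inv_red h)

include hB hpi in
lemma pi_step {p : List ι} {a : ι} (h : cs.IsReduced (p ++ [a])) :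
    piB (cs.wordProd (p ++ [a]))⁻¹ = piB (cs.simple a * piB (cs.wordProd p)⁻¹) := by
  have e : (cs.wordProd (p ++ [a]))⁻¹ = cs.simple a * (cs.wordProd p)⁻¹ := by
    rw [cs.wordProd_append, cs.wordProd_singleton, mul_inv_rev, cs.inv_simple]
  rw [e, pi_simple_mul hB hpi (inv_red h)]

include hB hpi in
lemma read_run : ∀ r t u v : List ι, v = t ++ r → r ≠ [] →
    cs.IsReduced (u ++ v) →
    (cs.wordProd v)⁻¹ = piB (cs.wordProd (u ++ v))⁻¹ →
    (∃ q : ↥B × ↥B, q ∈ (vorNFA cs B piB).eval (u ++ t) ∧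
      (q.1 : W) = piB (cs.wordProd (u ++ t))⁻¹ ∧ (q.2 : W) = (cs.wordProd t)⁻¹) →
    ∃ q : ↥B × ↥B, q ∈ (vorNFA cs B piB).eval (u ++ v) ∧
      (q.1 : W) = piB (cs.wordProd (u ++ v))⁻¹ ∧ (q.2 : W) = 1 := by
  intro r
  induction r with
  | nil => intro t u v _ hr; exact absurd rfl hr
  | cons a r' ih =>
    rintro t u v hveq hne hred hb ⟨q, hq, hq1, hq2⟩
    have hsplit : u ++ v = ((u ++ t) ++ [a]) ++ r' := by
      subst hveq; simp
    have hprefix : cs.IsReduced ((u ++ t) ++ [a]) := by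
      have := hred
      rw [hsplit] at this
      exact (isReduced_append this).1
    have hcond : cs.length (cs.simple a * (q.1 : W)) = cs.length (q.1 : W) + 1 := by
      rw [hq1]
      exact cond_of_reduced hB hpi hprefix
    have hy'val : piB (cs.wordProd ((u ++ t) ++ [a]))⁻¹ = piB (cs.simple a * (q.1 : W)) := by
      rw [pi_step hB hpi hprefix, hq1]
    have hta : (cs.wordProd (t ++ [a]))⁻¹ = cs.simple a * (q.2 : W) := by
      rw [cs.wordProd_append, cs.wordProd_singleton, mul_inv_rev, cs.inv_simple, hq2]
    rcases eq_or_ne r' [] with rfl | hr'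
    · -- last letter: close the block
      have hveq' : v = t ++ [a] := by rw [hveq]
      have hT2 : cs.simple a * (q.2 : W) = piB (cs.simple a * (q.1 : W)) := by
        rw [← hta, ← hveq', hb, hveq', ← List.append_assoc, hy'val]
      refine ⟨(⟨piB (cs.simple a * (q.1 : W)), pi_mem hpi _⟩, ⟨1, one_memB hpi hB⟩), ?_, ?_, rfl⟩
      · have : u ++ v = (u ++ t) ++ [a] := by rw [hveq', List.append_assoc]
        rw [this, NFA.eval_append_singleton, NFA.mem_stepSet]
        exact ⟨q, hq, hcond, rfl, Or.inr ⟨rfl, hT2⟩⟩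
      · show piB (cs.simple a * (q.1 : W)) = piB (cs.wordProd (u ++ v))⁻¹
        rw [hveq', ← List.append_assoc, hy'val]
    · -- continue the block
      have hmemB : (cs.wordProd (t ++ [a]))⁻¹ ∈ B := by
        have hvred : cs.IsReduced v := (isReduced_append (ω₁ := u) (ω₂ := v) hred).2
        have hbB : (cs.wordProd ((t ++ [a]) ++ r'))⁻¹ ∈ B := by
          rw [List.append_assoc, List.singleton_append, ← hveq, hb]
          exact pi_mem hpi _
        refine suffix_memB hB hpi ?_ hbB
        rw [List.append_assoc, List.singleton_append, ← hveq]
        exact hvred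
      refine ih (t ++ [a]) u v (by subst hveq; simp) hr' hred hb
        ⟨(⟨piB (cs.simple a * (q.1 : W)), pi_mem hpi _⟩, ⟨(cs.wordProd (t ++ [a]))⁻¹, hmemB⟩),
          ?_, ?_, rfl⟩
      · have : u ++ (t ++ [a]) = (u ++ t) ++ [a] := by rw [List.append_assoc]
        rw [this, NFA.eval_append_singleton, NFA.mem_stepSet]
        exact ⟨q, hq, hcond, rfl, Or.inl hta⟩
      · show piB (cs.simple a * (q.1 : W)) = piB (cs.wordProd (u ++ (t ++ [a])))⁻¹
        rw [← List.append_assoc, hy'val]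

include hB hpi in
lemma vorL_eval {g : W} {v : List ι} (h : VorL cs piB g v) :
    ∃ q : ↥B × ↥B, q ∈ (vorNFA cs B piB).eval v ∧
      (q.1 : W) = piB g⁻¹ ∧ (q.2 : W) = 1 := by
  induction h with
  | nil =>
    refine ⟨(⟨1, one_memB hpi hB⟩, ⟨1, one_memB hpi hB⟩), ?_, ?_, rfl⟩
    · rw [NFA.eval_nil]
      exact ⟨rfl, rfl⟩
    · show (1 : W) = piB (1 : W)⁻¹
      rw [inv_one, pi_one hpi]
  | @step g u v hg hu hv hmin ih =>
    obtain ⟨q, hq, hq1, hq2⟩ := ih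
    have hwp : cs.wordProd u = vor piB g := (vorL_prod_reduced hpi hu).1
    have hfull := vorL_prod_reduced hpi (VorL.step hg hu hv hmin)
    rcases eq_or_ne v [] with rfl | hvne
    · have hvor : vor piB g = g := by
        have h1 : (vor piB g)⁻¹ * g = 1 := by rw [← hv, cs.wordProd_nil]
        have := inv_mul_eq_one.mp h1
        exact this
      refine ⟨q, by simpa using hq, ?_, hq2⟩
      rw [hq1, hvor]
    · have hb : (cs.wordProd v)⁻¹ = piB (cs.wordProd (u ++ v))⁻¹ := by
        rw [hfull.1, hv, vor_inv_mul, inv_inv]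
      obtain ⟨q', hq', h1, h2⟩ := read_run hB hpi v [] u v (by simp) hvne hfull.2 hb
        ⟨q, by simpa using hq, by rw [hq1, List.append_nil, hwp], by simp [hq2]⟩
      exact ⟨q', hq', by rw [h1, hfull.1], h2⟩

end Main2

end VorProof2

/-- If `B` is a finite Garside shadow, then the voracious language `V_B`
is a regular language over `S`. -/
theorem vorLang_regular [Finite ι] (cs : CoxeterSystem cm W)
    (B : Set W) (hB : IsGarsideShadow cs B) (hBfin : B.Finite)
    (piB : W → W) (hpi : IsGarsideProjection cs B piB) :
    (VorLang cs piB).IsRegular := by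
  classical
  haveI : Finite ↥B := hBfin.to_subtype
  haveI : Fintype ↥B := Fintype.ofFinite _
  refine ⟨Set (↥B × ↥B), Fintype.ofFinite _, (VorProof2.vorNFA cs B piB).toDFA, ?_⟩
  rw [NFA.toDFA_correct]
  ext w
  rw [NFA.mem_accepts]
  constructor
  · rintro ⟨q, hacc, heval⟩
    obtain ⟨hred, -, p0, t, hp, hVor, ht⟩ := VorProof2.inv_of_eval hB hpi w q heval
    have haccv : ((q.2 : W)) = 1 := hacc
    have ht1 : cs.wordProd t = 1 := by rw [ht, haccv, inv_one]
    have htnil : t = [] := by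
      have hred' : cs.IsReduced (p0 ++ t) := by rwa [hp] at hred
      have h2 := (VorProof2.isReduced_append hred').2
      unfold CoxeterSystem.IsReduced at h2
      rw [ht1, cs.length_one] at h2
      exact List.length_eq_zero_iff.mp h2.symm
    subst htnil
    rw [List.append_nil] at hp
    subst hp
    exact ⟨cs.wordProd w, hVor⟩
  · rintro ⟨g, hg⟩
    obtain ⟨q, hq, -, h2⟩ := VorProof2.vorL_eval hB hpi hg
    exact ⟨q, h2, hq⟩
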